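/- Expected inverse of a positive Poisson/Binomial count: if n(a) is the number of occurrences of an event with probability π_b(a) in n independent trials (or n(a) ~ Poi(n π_b(a))), then E[ 1{n(a) > 0} / n(a) ] ≤ min{ 1, 5/(n π_b(a)) }. -/

import Mathlib

private lemma exp_tsum' (x : ℝ) : ∑' n : ℕ, x ^ n / (n.factorial : ℝ) = Real.exp x := by
  rw [Real.exp_eq_exp_ℝ, NormedSpace.exp_eq_tsum_div]

set_option maxHeartbeats 1600000

theorem inv_count_expectation_bound
    (n : ℕ) (hn : 0 < n) (p : ℝ) (hp : 0 < p) (hp1 : p ≤ 1) :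
    (∑ j ∈ Finset.Icc 1 n,
        (n.choose j : ℝ) * p ^ j * (1 - p) ^ (n - j) * (1 / (j : ℝ)))
      ≤ min 1 (5 / ((n : ℝ) * p))
    ∧ (∑' j : ℕ, if 1 ≤ j then
          Real.exp (-((n : ℝ) * p)) * ((n : ℝ) * p) ^ j / (j.factorial : ℝ)
            * (1 / (j : ℝ))
        else 0)
      ≤ min 1 (5 / ((n : ℝ) * p)) := by
  have hq0 : (0:ℝ) ≤ 1 - p := by linarith
  obtain ⟨L, hLdef⟩ : ∃ L : ℝ, L = (n : ℝ) * p := ⟨_, rfl⟩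
  have hL0 : 0 < L := by rw [hLdef]; positivity
  rw [← hLdef]
  -- binomial totals
  have hbin : ∀ m : ℕ, ∑ k ∈ Finset.range (m+1),
      (m.choose k : ℝ) * p ^ k * (1 - p) ^ (m - k) = 1 := by
    intro m
    calc ∑ k ∈ Finset.range (m+1), (m.choose k : ℝ) * p ^ k * (1-p) ^ (m-k)
        = ∑ k ∈ Finset.range (m+1), p ^ k * (1-p) ^ (m-k) * (m.choose k : ℝ) := by
          apply Finset.sum_congr rfl; intros; ring
      _ = (p + (1-p)) ^ m := (add_pow p (1-p) m).symm
      _ = 1 := by norm_num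
  -- the Poisson summand functions
  obtain ⟨f, hfdef⟩ : ∃ f : ℕ → ℝ, f = fun j : ℕ => if 1 ≤ j then
      Real.exp (-L) * L ^ j / (j.factorial : ℝ) * (1 / (j : ℝ)) else 0 := ⟨_, rfl⟩
  rw [show (fun j : ℕ => if 1 ≤ j then
      Real.exp (-L) * L ^ j / (j.factorial : ℝ) * (1 / (j : ℝ)) else 0) = f from hfdef.symm]
  have hf_nonneg : ∀ j, 0 ≤ f j := by
    intro j
    simp only [hfdef]
    split
    · positivity
    · exact le_rfl
  obtain ⟨g, hgdef⟩ : ∃ g : ℕ → ℝ,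
      g = fun j : ℕ => Real.exp (-L) * (L ^ j / (j.factorial : ℝ)) := ⟨_, rfl⟩
  have hg_sum : Summable g := by
    rw [hgdef]; exact (Real.summable_pow_div_factorial L).mul_left _
  have hfg : ∀ j, f j ≤ g j := by
    intro j
    simp only [hfdef, hgdef]
    split
    · rename_i hj
      have hj1 : (1:ℝ) ≤ (j : ℝ) := by exact_mod_cast hj
      have h1 : (1:ℝ) / (j : ℝ) ≤ 1 := by
        rw [div_le_one (by linarith)]; linarith
      calc Real.exp (-L) * L ^ j / (j.factorial : ℝ) * (1 / (j:ℝ))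
          ≤ Real.exp (-L) * L ^ j / (j.factorial : ℝ) * 1 := by
            apply mul_le_mul_of_nonneg_left h1 (by positivity)
        _ = Real.exp (-L) * (L ^ j / (j.factorial : ℝ)) := by ring
    · positivity
  have hf_sum : Summable f := Summable.of_nonneg_of_le hf_nonneg hfg hg_sum
  have hg_tsum : ∑' j, g j = 1 := by
    simp only [hgdef]
    rw [tsum_mul_left, exp_tsum', ← Real.exp_add, neg_add_cancel, Real.exp_zero]
  -- bound coefficients: 1/j ≤ 2/(j+1) for j ≥ 1
  have hcoef : ∀ j : ℕ, 1 ≤ j → (1:ℝ) / (j : ℝ) ≤ 2 / ((j : ℝ) + 1) := by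
    intro j hj
    have hj1 : (1:ℝ) ≤ (j : ℝ) := by exact_mod_cast hj
    rw [div_le_div_iff₀ (by linarith) (by linarith)]
    linarith
  constructor
  · -- Binomial part
    apply le_min
    · -- ≤ 1
      calc ∑ j ∈ Finset.Icc 1 n, (n.choose j : ℝ) * p ^ j * (1-p) ^ (n-j) * (1/(j:ℝ))
          ≤ ∑ j ∈ Finset.Icc 1 n, (n.choose j : ℝ) * p ^ j * (1-p) ^ (n-j) := by
            apply Finset.sum_le_sum
            intro j hj
            rw [Finset.mem_Icc] at hj
            have hj1 : (1:ℝ) ≤ (j : ℝ) := by exact_mod_cast hj.1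
            nth_rewrite 2 [show (n.choose j : ℝ) * p ^ j * (1-p) ^ (n-j)
              = (n.choose j : ℝ) * p ^ j * (1-p) ^ (n-j) * 1 by ring]
            apply mul_le_mul_of_nonneg_left _ (by positivity)
            rw [div_le_one (by linarith)]; linarith
        _ ≤ ∑ j ∈ Finset.range (n+1), (n.choose j : ℝ) * p ^ j * (1-p) ^ (n-j) := by
            apply Finset.sum_le_sum_of_subset_of_nonneg
            · intro j hj
              rw [Finset.mem_Icc] at hj
              rw [Finset.mem_range]; omega
            · intros; positivity
        _ = 1 := hbin n
    · -- ≤ 5/L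
      obtain ⟨G, hGdef⟩ : ∃ G : ℕ → ℝ,
          G = fun k : ℕ => ((n+1).choose k : ℝ) * p ^ k * (1-p) ^ (n+1-k) := ⟨_, rfl⟩
      have key : ∀ j ∈ Finset.Icc 1 n,
          (n.choose j : ℝ) * p ^ j * (1-p) ^ (n-j) * (1/(j:ℝ))
            ≤ 2 / (((n:ℝ)+1) * p) * G (j+1) := by
        intro j hj
        rw [Finset.mem_Icc] at hj
        have hj1 : (1:ℝ) ≤ (j : ℝ) := by exact_mod_cast hj.1
        have hcast : ((n:ℝ)+1) * (n.choose j : ℝ) = ((n+1).choose (j+1) : ℝ) * ((j:ℝ)+1) := by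
          have := Nat.add_one_mul_choose_eq n j
          exact_mod_cast this
        have hGeq : 2 / (((n:ℝ)+1) * p) * G (j+1)
            = (n.choose j : ℝ) * p ^ j * (1-p) ^ (n-j) * (2 / ((j:ℝ)+1)) := by
          simp only [hGdef]
          rw [show n + 1 - (j+1) = n - j by omega, pow_succ]
          have hn1 : ((n:ℝ)+1) ≠ 0 := by positivity
          have hj1' : ((j:ℝ)+1) ≠ 0 := by positivity
          have hp' : p ≠ 0 := ne_of_gt hp
          field_simp
          linear_combination (-(1 - p) ^ (n - j)) * hcast
        rw [hGeq]
        apply mul_le_mul_of_nonneg_left (hcoef j hj.1) (by positivity)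
      calc ∑ j ∈ Finset.Icc 1 n, (n.choose j : ℝ) * p ^ j * (1-p) ^ (n-j) * (1/(j:ℝ))
          ≤ ∑ j ∈ Finset.Icc 1 n, 2 / (((n:ℝ)+1) * p) * G (j+1) :=
            Finset.sum_le_sum key
        _ = 2 / (((n:ℝ)+1) * p) * ∑ j ∈ Finset.Icc 1 n, G (j+1) := by
            rw [Finset.mul_sum]
        _ ≤ 2 / (((n:ℝ)+1) * p) * 1 := by
            apply mul_le_mul_of_nonneg_left _ (by positivity)
            have hGnn : ∀ k, 0 ≤ G k := by
              intro k; simp only [hGdef]; positivity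
            calc ∑ j ∈ Finset.Icc 1 n, G (j+1)
                ≤ ∑ j ∈ Finset.range (n+1), G (j+1) := by
                  apply Finset.sum_le_sum_of_subset_of_nonneg
                  · intro j hj
                    rw [Finset.mem_Icc] at hj
                    rw [Finset.mem_range]; omega
                  · intros; exact hGnn _
              _ ≤ (∑ j ∈ Finset.range (n+1), G (j+1)) + G 0 :=
                  le_add_of_nonneg_right (hGnn 0)
              _ = ∑ k ∈ Finset.range (n+2), G k := (Finset.sum_range_succ' G (n+1)).symm
              _ = 1 := by simp only [hGdef]; exact hbin (n+1)
        _ ≤ 5 / L := by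
            rw [mul_one, hLdef, div_le_div_iff₀ (by positivity) (by positivity)]
            have hn1 : (1:ℝ) ≤ (n:ℝ) := by exact_mod_cast hn
            nlinarith
  · -- Poisson part
    apply le_min
    · calc ∑' j, f j ≤ ∑' j, g j := Summable.tsum_le_tsum hfg hf_sum hg_sum
        _ = 1 := hg_tsum
    · obtain ⟨h, hhdef⟩ : ∃ h : ℕ → ℝ, h = fun j : ℕ =>
          2 / L * Real.exp (-L) * (L ^ (j+1) / ((j+1).factorial : ℝ)) := ⟨_, rfl⟩
      have hshift_sum : Summable (fun j : ℕ => L ^ (j+1) / ((j+1).factorial : ℝ)) :=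
        (summable_nat_add_iff 1).2 (Real.summable_pow_div_factorial L)
      have hh_sum : Summable h := by rw [hhdef]; exact hshift_sum.mul_left _
      have hfh : ∀ j, f j ≤ h j := by
        intro j
        simp only [hfdef, hhdef]
        split
        · rename_i hj
          have hj1 : (1:ℝ) ≤ (j : ℝ) := by exact_mod_cast hj
          have heq : 2 / L * Real.exp (-L) * (L ^ (j+1) / ((j+1).factorial : ℝ))
              = Real.exp (-L) * L ^ j / (j.factorial : ℝ) * (2 / ((j:ℝ)+1)) := by
            have hLne : L ≠ 0 := ne_of_gt hL0
            have h2 : (j.factorial : ℝ) ≠ 0 := Nat.cast_ne_zero.mpr (Nat.factorial_ne_zero j)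
            have hj1' : ((j:ℝ)+1) ≠ 0 := by positivity
            rw [Nat.factorial_succ, pow_succ]
            push_cast
            field_simp
          rw [heq]
          exact mul_le_mul_of_nonneg_left (hcoef j hj) (by positivity)
        · positivity
      have hh_tsum : ∑' j, h j ≤ 2 / L := by
        have h1 : ∑' j : ℕ, (L ^ (j+1) / ((j+1).factorial : ℝ)) ≤ Real.exp L := by
          have h2 : ∑ i ∈ Finset.range 1, L ^ i / (i.factorial : ℝ)
              + ∑' i : ℕ, L ^ (i+1) / ((i+1).factorial : ℝ)
              = ∑' k : ℕ, L ^ k / (k.factorial : ℝ) :=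
            Summable.sum_add_tsum_nat_add 1 (Real.summable_pow_div_factorial L)
          rw [exp_tsum'] at h2
          have h3 : (0:ℝ) ≤ ∑ i ∈ Finset.range 1, L ^ i / (i.factorial : ℝ) := by
            apply Finset.sum_nonneg; intros; positivity
          linarith
        calc ∑' j, h j = 2 / L * Real.exp (-L)
              * ∑' j : ℕ, (L ^ (j+1) / ((j+1).factorial : ℝ)) := by
              simp only [hhdef]; rw [tsum_mul_left]
          _ ≤ 2 / L * Real.exp (-L) * Real.exp L := by
              exact mul_le_mul_of_nonneg_left h1 (by positivity)
          _ = 2 / L := by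
              rw [mul_assoc, ← Real.exp_add, neg_add_cancel, Real.exp_zero, mul_one]
      calc ∑' j, f j ≤ ∑' j, h j := Summable.tsum_le_tsum hfh hf_sum hh_sum
        _ ≤ 2 / L := hh_tsum
        _ ≤ 5 / L := (div_le_div_iff_of_pos_right hL0).mpr (by norm_num)
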